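/- Let U be a deductively closed theory and ▵ a sentence operator satisfying the Kreisel condition (U ⊢ ▵A iff U ⊢ A) and provable Σ⁰₁-completeness for the sentence S in question (U ⊢ S → ▵S). If U + ¬▵⊥ ⊢ S then U ⊢ S, i.e., U is conservative over U + ¬▵⊥ for such sentences S. (Abstractly: if U ⊢ ¬▵⊥ → S and U ⊢ S → ▵S and U ⊢ ⊥ → anything with L2-style distribution so that U ⊢ ▵⊥ → ▵S, then U ⊢ ▵S, hence by Kreisel U ⊢ S.) -/
import Mathlib


/-- Propositional modal formulas with two modalities `box` (□) and `tri` (▵). -/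
inductive Fml : Type where
  | bot : Fml
  | var : ℕ → Fml
  | imp : Fml → Fml → Fml
  | box : Fml → Fml
  | tri : Fml → Fml
  deriving DecidableEq

namespace Fml

def neg (a : Fml) : Fml := a.imp bot
def conj (a b : Fml) : Fml := (a.imp b.neg).neg
def disj (a b : Fml) : Fml := a.neg.imp b
def iff_ (a b : Fml) : Fml := conj (a.imp b) (b.imp a)

/-- Boolean evaluation treating `bot`/`imp` classically and everything else
(variables and boxed formulas) as atoms. -/
def eval (v : Fml → Bool) : Fml → Bool
  | bot => false
  | imp a b => !(eval v a) || eval v b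
  | f => v f

/-- Classical (propositional) tautologies. -/
def Taut (f : Fml) : Prop := ∀ v, eval v f = true

end Fml

/-- If ▵ satisfies L1, L2 and the Kreisel condition over a deductively
closed theory `U`, and `U ⊢ S → ▵S` (provable Σ⁰₁-completeness for `S`), then
`U + ¬▵⊥ ⊢ S` implies `U ⊢ S`. -/
theorem sigma1_conservativity
    (U : Fml → Prop)
    (taut : ∀ f, Fml.Taut f → U f)
    (mp : ∀ a b : Fml, U (a.imp b) → U a → U b)
    (L1 : ∀ a : Fml, U a → U a.tri)
    (L2 : ∀ a b : Fml, U ((Fml.conj a.tri (a.imp b).tri).imp b.tri))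
    (kreisel : ∀ a : Fml, U a.tri ↔ U a) :
    ∀ S : Fml,
      U ((Fml.neg (Fml.tri Fml.bot)).imp S) →
      U (S.imp S.tri) →
      U S := by
  intro S h1 h2
  rw [← kreisel]
  -- from L1 on the tautology ⊥ → S
  have hw : U (Fml.tri (Fml.imp Fml.bot S)) := by
    apply L1
    apply taut
    intro v
    simp [Fml.eval]
  have hL2 := L2 Fml.bot S
  -- big tautology: (¬x → y) → (y → z) → w → (conj x w → z) → z
  have T : U ((((Fml.tri Fml.bot).neg.imp S).imp
      ((S.imp S.tri).imp
        ((Fml.tri (Fml.imp Fml.bot S)).imp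
          (((Fml.conj (Fml.tri Fml.bot) (Fml.imp Fml.bot S).tri).imp S.tri).imp
            S.tri))))) := by
    apply taut
    intro v
    simp only [Fml.eval, Fml.neg, Fml.conj, Fml.iff_, Fml.disj]
    generalize v (Fml.tri Fml.bot) = x
    generalize Fml.eval v S = y
    generalize v S.tri = z
    generalize v (Fml.tri (Fml.imp Fml.bot S)) = w
    cases x <;> cases y <;> cases z <;> cases w <;> rfl
  exact mp _ _ (mp _ _ (mp _ _ (mp _ _ T h1) h2) hw) hL2
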